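/- Let Ē ∈ ℝ and let k ≥ max{1, 4Ē²} be real. For ζ ∈ ℂ \ {±k} set a(ζ) = k²Ē²/(ζ² − k²), and define λ(w) = (k² + 2a(k+w))^{1/2} using the principal branch of the complex square root. Then the map w ↦ λ(w) is complex-differentiable at every complex point w with 1 ≤ |w| ≤ k/2 (in particular, for such w the complex number k² + 2a(k+w) does not lie on the closed negative real axis). -/

import Mathlib

/-- For `k ≥ max{1, 4Ē²}` and `a(ζ) = k²Ē²/(ζ² − k²)`, the principal square root
`λ(w) = (k² + 2a(k+w))^{1/2}` is complex-differentiable at every `w` with `1 ≤ |w| ≤ k/2`. -/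
theorem differentiableAt_lambda (E k : ℝ) (hk1 : 1 ≤ k) (hkE : 4 * E ^ 2 ≤ k) :
    ∀ w : ℂ, 1 ≤ ‖w‖ → ‖w‖ ≤ k / 2 →
      DifferentiableAt ℂ
        (fun w : ℂ =>
          ((k : ℂ) ^ 2 + 2 * ((k : ℂ) ^ 2 * (E : ℂ) ^ 2 / (((k : ℂ) + w) ^ 2 - (k : ℂ) ^ 2)))
            ^ ((1 : ℂ) / 2)) w := by
  intro w hw1 hw2
  have hk0 : (0:ℝ) < k := lt_of_lt_of_le one_pos hk1
  -- denominator factorization and bound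
  have hdfac : (((k:ℂ) + w) ^ 2 - (k:ℂ) ^ 2) = w * (w + 2 * k) := by ring
  have habs2k : ‖(2:ℂ) * (k:ℂ)‖ = 2 * k := by
    rw [norm_mul, Complex.norm_real]
    simp [abs_of_pos hk0]
  have habs2 : 3 * k / 2 ≤ ‖w + 2 * (k:ℂ)‖ := by
    have h : ‖2 * (k:ℂ)‖ ≤ ‖w + 2 * (k:ℂ)‖ + ‖w‖ := by
      have h' := norm_add_le (w + 2 * (k:ℂ)) (-w)
      simpa using h'
    rw [habs2k] at h
    linarith
  have hw0 : ‖w‖ ≠ 0 := by linarith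
  have h2k0 : ‖w + 2 * (k:ℂ)‖ ≠ 0 := (lt_of_lt_of_le (by linarith) habs2).ne'
  have hdne : (((k:ℂ) + w) ^ 2 - (k:ℂ) ^ 2) ≠ 0 := by
    rw [hdfac]
    exact mul_ne_zero (fun h => hw0 (by simp [h])) (fun h => h2k0 (by simp [h]))
  -- bound |2a| ≤ k²/3
  have habsden : 3 * k / 2 ≤ ‖((k:ℂ) + w) ^ 2 - (k:ℂ) ^ 2‖ := by
    rw [hdfac, norm_mul]
    calc 3 * k / 2 = 1 * (3 * k / 2) := by ring
    _ ≤ ‖w‖ * ‖w + 2 * k‖ := by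
        apply mul_le_mul hw1 habs2 (by linarith) (norm_nonneg w)
  have hnum : ‖(2:ℂ) * ((k:ℂ) ^ 2 * (E:ℂ) ^ 2)‖ = 2 * (k ^ 2 * E ^ 2) := by
    simp [norm_mul, norm_pow, Complex.norm_real, abs_of_pos hk0, sq_abs]
  have hbound : ‖2 * ((k:ℂ) ^ 2 * (E:ℂ) ^ 2 / (((k:ℂ) + w) ^ 2 - (k:ℂ) ^ 2))‖
      ≤ k ^ 2 / 3 := by
    rw [mul_div_assoc', norm_div, hnum]
    rw [div_le_div_iff₀ (lt_of_lt_of_le (by linarith) habsden) (by positivity)]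
    have h1 := mul_le_mul_of_nonneg_left habsden (sq_nonneg k)
    have h2 := mul_le_mul_of_nonneg_left hkE (sq_nonneg k)
    nlinarith [h1, h2]
  -- real part of base is positive
  have hre : 0 < ((k:ℂ) ^ 2 + 2 * ((k:ℂ) ^ 2 * (E:ℂ) ^ 2 / (((k:ℂ) + w) ^ 2 - (k:ℂ) ^ 2))).re := by
    have h1 : |(2 * ((k:ℂ) ^ 2 * (E:ℂ) ^ 2 / (((k:ℂ) + w) ^ 2 - (k:ℂ) ^ 2))).re|
        ≤ k ^ 2 / 3 := (Complex.abs_re_le_norm _).trans hbound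
    have h2 : ((k:ℂ) ^ 2 + 2 * ((k:ℂ) ^ 2 * (E:ℂ) ^ 2 / (((k:ℂ) + w) ^ 2 - (k:ℂ) ^ 2))).re
        = k ^ 2 + (2 * ((k:ℂ) ^ 2 * (E:ℂ) ^ 2 / (((k:ℂ) + w) ^ 2 - (k:ℂ) ^ 2))).re := by
      simp [Complex.add_re, ← Complex.ofReal_pow]
    rw [h2]
    have := abs_le.mp h1
    nlinarith
  -- differentiability of the inner function
  have hinner : DifferentiableAt ℂ
      (fun w : ℂ => (k:ℂ) ^ 2 + 2 * ((k:ℂ) ^ 2 * (E:ℂ) ^ 2 / (((k:ℂ) + w) ^ 2 - (k:ℂ) ^ 2))) w := by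
    apply DifferentiableAt.const_add
    apply DifferentiableAt.const_mul
    apply DifferentiableAt.div (differentiableAt_const _)
    · exact ((differentiableAt_const _).add differentiableAt_id).pow 2 |>.sub
        (differentiableAt_const _)
    · exact hdne
  exact hinner.cpow (differentiableAt_const _) (Or.inl hre)
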